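/- Let R be a ℤ-graded ring and J a graded ideal. Then J^⊥⊥ is a graded regular ideal of R. -/
import Mathlib


/-- The two-sided annihilator of a subset `X` of a ring `R`. -/
def perpSet {R : Type*} [Ring R] (X : Set R) : Set R :=
  {a : R | ∀ x ∈ X, a * x = 0 ∧ x * a = 0}

/-- A two-sided ideal of a ℤ-graded ring is graded if it contains all homogeneous
components of each of its elements. -/
def IsGradedTwoSidedIdeal {R : Type*} [Ring R] (𝒜 : ℤ → AddSubgroup R) [GradedRing 𝒜]
    (J : TwoSidedIdeal R) : Prop :=
  ∀ x ∈ J, ∀ n : ℤ, ((DirectSum.decompose 𝒜 x n : 𝒜 n) : R) ∈ J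

section aux
variable {R : Type*} [Ring R]

lemma perpSet_antitone {X Y : Set R} (h : X ⊆ Y) : perpSet Y ⊆ perpSet X :=
  fun _ ha x hx => ha x (h hx)

lemma subset_perpSet_perpSet (X : Set R) : X ⊆ perpSet (perpSet X) :=
  fun x hx a ha => ⟨(ha x hx).2, (ha x hx).1⟩

lemma perpSet_perpSet_perpSet (X : Set R) : perpSet (perpSet (perpSet X)) = perpSet X :=
  Set.Subset.antisymm (perpSet_antitone (subset_perpSet_perpSet X))
    (subset_perpSet_perpSet (perpSet X))

/-- The annihilator of a two-sided ideal is a two-sided ideal. -/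
def perpIdeal (J : TwoSidedIdeal R) : TwoSidedIdeal R :=
  TwoSidedIdeal.mk' (perpSet (J : Set R))
    (fun x _ => by simp)
    (fun {a b} ha hb x hx => by
      obtain ⟨h1, h2⟩ := ha x hx; obtain ⟨h3, h4⟩ := hb x hx
      constructor <;> simp [add_mul, mul_add, h1, h2, h3, h4])
    (fun {a} ha x hx => by
      obtain ⟨h1, h2⟩ := ha x hx
      constructor <;> simp [neg_mul, mul_neg, h1, h2])
    (fun {r a} ha x hx => by
      refine ⟨by rw [mul_assoc, (ha x hx).1, mul_zero], ?_⟩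
      rw [← mul_assoc]
      exact (ha (x * r) (J.mul_mem_right _ _ hx)).2)
    (fun {a r} ha x hx => by
      refine ⟨?_, by rw [← mul_assoc, (ha x hx).2, zero_mul]⟩
      rw [mul_assoc]
      exact (ha (r * x) (J.mul_mem_left _ _ hx)).1)

lemma coe_perpIdeal (J : TwoSidedIdeal R) : (perpIdeal J : Set R) = perpSet (J : Set R) :=
  TwoSidedIdeal.coe_mk' _ _ _ _ _ _

lemma mem_perpIdeal {J : TwoSidedIdeal R} {a : R} :
    a ∈ perpIdeal J ↔ a ∈ perpSet (J : Set R) := by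
  rw [← SetLike.mem_coe, coe_perpIdeal]

end aux

section graded
variable {R : Type*} [Ring R] (𝒜 : ℤ → AddSubgroup R) [GradedRing 𝒜]

open DirectSum

/-- The annihilator of a graded two-sided ideal is graded. -/
lemma isGraded_perpIdeal {J : TwoSidedIdeal R} (hJ : IsGradedTwoSidedIdeal 𝒜 J) :
    IsGradedTwoSidedIdeal 𝒜 (perpIdeal J) := by
  intro a ha n
  rw [mem_perpIdeal] at ha ⊢
  intro x hx
  classical
  -- decompose x into homogeneous components, each of which lies in J
  have hxsum := DirectSum.sum_support_decompose 𝒜 x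
  constructor
  · -- a_n * x = 0
    calc ((decompose 𝒜 a n : 𝒜 n) : R) * x
        = ∑ m ∈ (decompose 𝒜 x).support,
            ((decompose 𝒜 a n : 𝒜 n) : R) * ((decompose 𝒜 x m : 𝒜 m) : R) := by
          rw [← Finset.mul_sum]; congr 1; exact hxsum.symm
      _ = 0 := by
          refine Finset.sum_eq_zero fun m _ => ?_
          have hmem : ((decompose 𝒜 x m : 𝒜 m) : R) ∈ J := hJ x hx m
          have hzero : a * ((decompose 𝒜 x m : 𝒜 m) : R) = 0 := (ha _ hmem).1
          have := DirectSum.coe_decompose_mul_add_of_right_mem 𝒜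
            (a := a) (i := n) (SetLike.coe_mem (decompose 𝒜 x m))
          rw [hzero] at this
          simpa using this.symm
  · calc x * ((decompose 𝒜 a n : 𝒜 n) : R)
        = ∑ m ∈ (decompose 𝒜 x).support,
            ((decompose 𝒜 x m : 𝒜 m) : R) * ((decompose 𝒜 a n : 𝒜 n) : R) := by
          rw [← Finset.sum_mul]; congr 1; exact hxsum.symm
      _ = 0 := by
          refine Finset.sum_eq_zero fun m _ => ?_
          have hmem : ((decompose 𝒜 x m : 𝒜 m) : R) ∈ J := hJ x hx m
          have hzero : ((decompose 𝒜 x m : 𝒜 m) : R) * a = 0 := (ha _ hmem).2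
          have := DirectSum.coe_decompose_mul_add_of_left_mem 𝒜
            (b := a) (j := n) (SetLike.coe_mem (decompose 𝒜 x m))
          rw [hzero] at this
          simpa using this.symm

end graded

/-- If `J` is a graded two-sided ideal of a ℤ-graded ring `R`, then `J^⊥⊥` is a graded
regular ideal of `R` (regular meaning `(J^⊥⊥)^⊥⊥ = J^⊥⊥`). -/
theorem perp_perp_of_graded_isGraded_regular {R : Type*} [Ring R] (𝒜 : ℤ → AddSubgroup R)
    [GradedRing 𝒜] (J : TwoSidedIdeal R) (hJ : IsGradedTwoSidedIdeal 𝒜 J) :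
    ∃ P : TwoSidedIdeal R, (P : Set R) = perpSet (perpSet (J : Set R)) ∧
      IsGradedTwoSidedIdeal 𝒜 P ∧ perpSet (perpSet (P : Set R)) = (P : Set R) := by
  refine ⟨perpIdeal (perpIdeal J), ?_, ?_, ?_⟩
  · rw [coe_perpIdeal, coe_perpIdeal]
  · exact isGraded_perpIdeal 𝒜 (isGraded_perpIdeal 𝒜 hJ)
  · rw [coe_perpIdeal, coe_perpIdeal, perpSet_perpSet_perpSet]
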